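/- With parameters ε = δ₀/8, θ = 3ε, α = 5ε (so α = θ + 2ε), let h be continuous on X = GL_d(R) × P(R^d) with |h|_θ < ∞ and k_{ε,α}(h) < ∞. Then for every t ∈ R, the function e^{itρ} h, where ρ(g,ū) = log‖gu‖ for a unit representative u, satisfies k_{ε,α}(e^{itρ}h) ≤ 2|t|^ε |h|_θ + k_{ε,α}(h). -/

import Mathlib

open scoped LinearAlgebra.Projectivization RealInnerProductSpace ENNReal
open MeasureTheory

noncomputable section

abbrev E (d : ℕ) := EuclideanSpace ℝ (Fin d)
abbrev Gd (d : ℕ) := (E d →L[ℝ] E d)ˣ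

/-- `N(g) = max(‖g‖, ‖g⁻¹‖)`. -/
def Nnorm {d : ℕ} (g : Gd d) : ℝ :=
  max ‖(g : E d →L[ℝ] E d)‖ ‖((g⁻¹ : Gd d) : E d →L[ℝ] E d)‖

instance (d : ℕ) : TopologicalSpace (ℙ ℝ (E d)) := instTopologicalSpaceQuotient

/-- Angular distance between the directions of nonzero vectors `x, y`:
`d(x̄, ȳ) = ‖x ∧ y‖/(‖x‖‖y‖) = √(‖x‖²‖y‖² − ⟨x,y⟩²)/(‖x‖‖y‖)`. -/
def angDist {d : ℕ} (x y : E d) : ℝ :=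
  Real.sqrt (‖x‖ ^ 2 * ‖y‖ ^ 2 - ⟪x, y⟫ ^ 2) / (‖x‖ * ‖y‖)

/-- Angular distance on projective space, via representatives (it is
scale-invariant). -/
def dP {d : ℕ} (x y : ℙ ℝ (E d)) : ℝ := angDist x.rep y.rep

/-- The norm cocycle `ρ(g, v̄) = log (‖gv‖/‖v‖)`. -/
def ρ {d : ℕ} (g : Gd d) (x : ℙ ℝ (E d)) : ℝ :=
  Real.log (‖(g : E d →L[ℝ] E d) x.rep‖ / ‖x.rep‖)

/-- The weighted sup-seminorm `|h|_θ = sup_{(g,ū)} |h(g,ū)| / N(g)^θ`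
(with values in `[0,∞]`). -/
def nθ {d : ℕ} (θ : ℝ) (h : Gd d → ℙ ℝ (E d) → ℂ) : ℝ≥0∞ :=
  ⨆ (g : Gd d) (x : ℙ ℝ (E d)),
    ENNReal.ofReal (‖h g x‖ / Nnorm g ^ θ)

/-- The weighted Hölder seminorm in the projective variable:
`k_{ε,α}(h) = sup_{g, ū ≠ v̄} |h(g,ū)−h(g,v̄)| / (d(ū,v̄)^ε N(g)^α)`. -/
def kP {d : ℕ} (ε α : ℝ) (h : Gd d → ℙ ℝ (E d) → ℂ) : ℝ≥0∞ :=
  ⨆ (g : Gd d) (x : ℙ ℝ (E d)) (y : ℙ ℝ (E d)) (_ : x ≠ y),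
    ENNReal.ofReal (‖h g x - h g y‖ / (dP x y ^ ε * Nnorm g ^ α))

/-- The weighted Hölder seminorm in the matrix variable:
`k'_{ε,β}(h) = sup_{g ≠ g', ū} |h(g,ū)−h(g',ū)| / (‖g−g'‖^ε N(g)^β N(g')^β)`. -/
def kG {d : ℕ} (ε β : ℝ) (h : Gd d → ℙ ℝ (E d) → ℂ) : ℝ≥0∞ :=
  ⨆ (g : Gd d) (g' : Gd d) (_ : g ≠ g') (x : ℙ ℝ (E d)),
    ENNReal.ofReal (‖h g x - h g' x‖ /
      (‖(g : E d →L[ℝ] E d) - (g' : E d →L[ℝ] E d)‖ ^ ε * Nnorm g ^ β * Nnorm g' ^ β))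

/-- The Banach norm `‖h‖_B = |h|_θ + k_{ε,α}(h) + k'_{ε,β}(h)` (in `[0,∞]`). -/
def normB {d : ℕ} (θ ε α β : ℝ) (h : Gd d → ℙ ℝ (E d) → ℂ) : ℝ≥0∞ :=
  nθ θ h + kP ε α h + kG ε β h

/-- With parameters `ε = δ₀/8`, `θ = 3ε`, `α = 5ε` (so `α = θ + 2ε`; as in the paper we may
assume `δ₀ ≤ 8/3` without loss of generality), if `h` is continuous with `|h|_θ < ∞` and
`k_{ε,α}(h) < ∞`, then for every `t ∈ ℝ`,
`k_{ε,α}(e^{itρ} h) ≤ 2|t|^ε |h|_θ + k_{ε,α}(h)`. -/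

lemma angDist_nonneg {d : ℕ} (x y : E d) : 0 ≤ angDist x y := by
  unfold angDist
  positivity

lemma angDist_unit {d : ℕ} {u v : E d} (hu : ‖u‖ = 1) (hv : ‖v‖ = 1) :
    angDist u v = Real.sqrt (1 - ⟪u, v⟫ ^ 2) := by
  simp [angDist, hu, hv]

lemma min_norm_le_sqrt_two_angDist {d : ℕ} {u v : E d} (hu : ‖u‖ = 1) (hv : ‖v‖ = 1) :
    min ‖u - v‖ ‖u + v‖ ≤ Real.sqrt 2 * angDist u v := by
  set c : ℝ := ⟪u, v⟫ with hc
  have hc1 : |c| ≤ 1 := by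
    have := abs_real_inner_le_norm u v
    rwa [hu, hv, one_mul] at this
  have h1 : ‖u - v‖ ^ 2 = 2 - 2 * c := by
    rw [@norm_sub_sq_real, hu, hv, hc]; ring_nf
  have h2 : ‖u + v‖ ^ 2 = 2 + 2 * c := by
    rw [@norm_add_sq_real, hu, hv, hc]; ring_nf
  rw [angDist_unit hu hv, ← Real.sqrt_mul (by norm_num : (0:ℝ) ≤ 2)]
  have habs := abs_le.1 hc1
  rcases le_total 0 c with h0 | h0
  · refine le_trans (min_le_left _ _) ?_
    rw [show ‖u - v‖ = Real.sqrt (2 - 2*c) by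
      rw [← h1]; exact (Real.sqrt_sq (norm_nonneg _)).symm]
    apply Real.sqrt_le_sqrt
    nlinarith
  · refine le_trans (min_le_right _ _) ?_
    rw [show ‖u + v‖ = Real.sqrt (2 + 2*c) by
      rw [← h2]; exact (Real.sqrt_sq (norm_nonneg _)).symm]
    apply Real.sqrt_le_sqrt
    nlinarith

lemma angDist_smul {d : ℕ} {a b : ℝ} (ha : a ≠ 0) (hb : b ≠ 0) (x y : E d) :
    angDist (a • x) (b • y) = angDist x y := by
  unfold angDist
  rw [norm_smul, norm_smul, real_inner_smul_left, real_inner_smul_right]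
  rw [Real.norm_eq_abs, Real.norm_eq_abs]
  have key : (|a| * ‖x‖) ^ 2 * (|b| * ‖y‖) ^ 2 - (a * (b * ⟪x, y⟫)) ^ 2
      = (|a| * |b|) ^ 2 * (‖x‖ ^ 2 * ‖y‖ ^ 2 - ⟪x, y⟫ ^ 2) := by
    simp only [mul_pow, sq_abs]
    ring
  rw [key, Real.sqrt_mul (sq_nonneg _), Real.sqrt_sq (by positivity)]
  have hab : |a| * |b| ≠ 0 := by positivity
  have hden : |a| * ‖x‖ * (|b| * ‖y‖) = (|a| * |b|) * (‖x‖ * ‖y‖) := by ring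
  rw [hden, mul_div_mul_left _ _ hab]

lemma inv_apply_apply {d : ℕ} (g : Gd d) (u : E d) :
    ((g⁻¹ : Gd d) : E d →L[ℝ] E d) ((g : E d →L[ℝ] E d) u) = u := by
  have h : ((g⁻¹ : Gd d) : E d →L[ℝ] E d) * (g : E d →L[ℝ] E d) = 1 := g.inv_mul
  calc ((g⁻¹ : Gd d) : E d →L[ℝ] E d) ((g : E d →L[ℝ] E d) u)
      = (((g⁻¹ : Gd d) : E d →L[ℝ] E d) * (g : E d →L[ℝ] E d)) u := rfl
    _ = u := by rw [h]; rfl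

lemma Nnorm_nonneg {d : ℕ} (g : Gd d) : 0 ≤ Nnorm g :=
  le_trans (norm_nonneg _) (le_max_left _ _)

lemma log_norm_key {d : ℕ} (G Gi : E d →L[ℝ] E d) (hinv : ∀ w, Gi (G w) = w)
    {w w' : E d} (hw : ‖w‖ = 1) (hw' : ‖w'‖ = 1) :
    Real.log ‖G w‖ - Real.log ‖G w'‖ ≤ ‖G‖ * ‖Gi‖ * ‖w - w'‖ := by
  have hw0 : w ≠ 0 := by intro h; rw [h] at hw; simp at hw
  have hw'0 : w' ≠ 0 := by intro h; rw [h] at hw'; simp at hw'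
  have hGw : (0:ℝ) < ‖G w‖ := by
    rw [norm_pos_iff]
    intro h
    exact hw0 (by rw [← hinv w, h, map_zero])
  have hGw' : (0:ℝ) < ‖G w'‖ := by
    rw [norm_pos_iff]
    intro h
    exact hw'0 (by rw [← hinv w', h, map_zero])
  have hB : 1 ≤ ‖Gi‖ * ‖G w'‖ := by
    calc (1:ℝ) = ‖w'‖ := hw'.symm
      _ = ‖Gi (G w')‖ := by rw [hinv]
      _ ≤ ‖Gi‖ * ‖G w'‖ := Gi.le_opNorm _
  have hdiff : ‖G w‖ - ‖G w'‖ ≤ ‖G‖ * ‖w - w'‖ := by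
    calc ‖G w‖ - ‖G w'‖ ≤ ‖G w - G w'‖ := by
          have := abs_norm_sub_norm_le (G w) (G w'); rw [abs_sub_le_iff] at this
          exact this.1
      _ = ‖G (w - w')‖ := by rw [map_sub]
      _ ≤ ‖G‖ * ‖w - w'‖ := G.le_opNorm _
  calc Real.log ‖G w‖ - Real.log ‖G w'‖ = Real.log (‖G w‖ / ‖G w'‖) := by
        rw [Real.log_div (ne_of_gt hGw) (ne_of_gt hGw')]
    _ ≤ ‖G w‖ / ‖G w'‖ - 1 := Real.log_le_sub_one_of_pos (by positivity)
    _ = (‖G w‖ - ‖G w'‖) / ‖G w'‖ := by field_simp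
    _ ≤ (‖G‖ * ‖w - w'‖) / ‖G w'‖ := by gcongr
    _ = (‖G‖ * ‖w - w'‖) * (‖G w'‖)⁻¹ := by rw [div_eq_mul_inv]
    _ ≤ (‖G‖ * ‖w - w'‖) * ‖Gi‖ := by
        apply mul_le_mul_of_nonneg_left _ (by positivity)
        rw [inv_le_iff_one_le_mul₀ hGw']
        linarith [hB]
    _ = ‖G‖ * ‖Gi‖ * ‖w - w'‖ := by ring

lemma log_norm_sub_le {d : ℕ} (g : Gd d) {u v : E d} (hu : ‖u‖ = 1) (hv : ‖v‖ = 1) :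
    |Real.log ‖(g : E d →L[ℝ] E d) u‖ - Real.log ‖(g : E d →L[ℝ] E d) v‖|
      ≤ Nnorm g ^ 2 * ‖u - v‖ := by
  have h1 := log_norm_key (g : E d →L[ℝ] E d) ((g⁻¹ : Gd d) : E d →L[ℝ] E d)
    (inv_apply_apply g) hu hv
  have h2 := log_norm_key (g : E d →L[ℝ] E d) ((g⁻¹ : Gd d) : E d →L[ℝ] E d)
    (inv_apply_apply g) hv hu
  rw [norm_sub_rev] at h2
  have hNN : ‖(g : E d →L[ℝ] E d)‖ * ‖((g⁻¹ : Gd d) : E d →L[ℝ] E d)‖ ≤ Nnorm g ^ 2 := by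
    have ha : ‖(g : E d →L[ℝ] E d)‖ ≤ Nnorm g := le_max_left _ _
    have hb : ‖((g⁻¹ : Gd d) : E d →L[ℝ] E d)‖ ≤ Nnorm g := le_max_right _ _
    nlinarith [norm_nonneg (g : E d →L[ℝ] E d), norm_nonneg ((g⁻¹ : Gd d) : E d →L[ℝ] E d)]
  have hmul : ‖(g : E d →L[ℝ] E d)‖ * ‖((g⁻¹ : Gd d) : E d →L[ℝ] E d)‖ * ‖u - v‖
      ≤ Nnorm g ^ 2 * ‖u - v‖ :=
    mul_le_mul_of_nonneg_right hNN (norm_nonneg _)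
  rw [abs_sub_le_iff]
  constructor <;> linarith

lemma rho_eq_log_norm_unit {d : ℕ} (g : Gd d) (x : ℙ ℝ (E d)) :
    ρ g x = Real.log ‖(g : E d →L[ℝ] E d) (‖x.rep‖⁻¹ • x.rep)‖ := by
  have hx0 : x.rep ≠ 0 := x.rep_nonzero
  have hn : (0:ℝ) < ‖x.rep‖ := norm_pos_iff.2 hx0
  rw [ρ, _root_.map_smul, norm_smul, Real.norm_eq_abs, abs_of_nonneg (by positivity)]
  rw [div_eq_inv_mul]

lemma dP_eq_angDist_unit {d : ℕ} (x y : ℙ ℝ (E d)) :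
    dP x y = angDist (‖x.rep‖⁻¹ • x.rep) (‖y.rep‖⁻¹ • y.rep) := by
  have hx : (‖x.rep‖ : ℝ)⁻¹ ≠ 0 := by
    simp [norm_eq_zero, x.rep_nonzero]
  have hy : (‖y.rep‖ : ℝ)⁻¹ ≠ 0 := by
    simp [norm_eq_zero, y.rep_nonzero]
  rw [dP, ← angDist_smul hx hy]

lemma abs_rho_sub_le {d : ℕ} (g : Gd d) (x y : ℙ ℝ (E d)) :
    |ρ g x - ρ g y| ≤ Real.sqrt 2 * (Nnorm g ^ 2 * dP x y) := by
  set u : E d := ‖x.rep‖⁻¹ • x.rep with hu'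
  set v : E d := ‖y.rep‖⁻¹ • y.rep with hv'
  have hu : ‖u‖ = 1 := norm_smul_inv_norm x.rep_nonzero
  have hv : ‖v‖ = 1 := norm_smul_inv_norm y.rep_nonzero
  have hvneg : ‖-v‖ = 1 := by rw [norm_neg]; exact hv
  have h1 : |ρ g x - ρ g y| ≤ Nnorm g ^ 2 * ‖u - v‖ := by
    rw [rho_eq_log_norm_unit g x, rho_eq_log_norm_unit g y]
    exact log_norm_sub_le g hu hv
  have h2 : |ρ g x - ρ g y| ≤ Nnorm g ^ 2 * ‖u + v‖ := by
    rw [rho_eq_log_norm_unit g x, rho_eq_log_norm_unit g y]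
    have := log_norm_sub_le g hu hvneg
    rw [map_neg, norm_neg, sub_neg_eq_add] at this
    exact this
  have hmin : |ρ g x - ρ g y| ≤ Nnorm g ^ 2 * min ‖u - v‖ ‖u + v‖ := by
    rcases le_total ‖u - v‖ ‖u + v‖ with hle | hle
    · rw [min_eq_left hle]; exact h1
    · rw [min_eq_right hle]; exact h2
  calc |ρ g x - ρ g y| ≤ Nnorm g ^ 2 * min ‖u - v‖ ‖u + v‖ := hmin
    _ ≤ Nnorm g ^ 2 * (Real.sqrt 2 * angDist u v) := by
        apply mul_le_mul_of_nonneg_left (min_norm_le_sqrt_two_angDist hu hv)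
        positivity
    _ = Real.sqrt 2 * (Nnorm g ^ 2 * dP x y) := by
        rw [dP_eq_angDist_unit]; ring

lemma abs_exp_I_mul_sub_one_le (c : ℝ) :
    ‖Complex.exp (Complex.I * c) - 1‖ ≤ |c| := by
  have h3 : Complex.exp (Complex.I * c) - 1
      = (Real.cos c - 1 : ℝ) + (Real.sin c : ℝ) * Complex.I := by
    rw [mul_comm, Complex.exp_mul_I]
    push_cast
    ring
  rw [h3, Complex.norm_add_mul_I]
  have h4 : (Real.cos c - 1) ^ 2 + Real.sin c ^ 2 = 2 - 2 * Real.cos c := by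
    have := Real.sin_sq_add_cos_sq c; nlinarith
  rw [h4]
  have h5 : 2 - 2 * Real.cos c ≤ c ^ 2 := by
    have := Real.one_sub_sq_div_two_le_cos (x := c); linarith
  calc Real.sqrt (2 - 2 * Real.cos c) ≤ Real.sqrt (c ^ 2) := Real.sqrt_le_sqrt h5
    _ = |c| := Real.sqrt_sq_eq_abs c

lemma abs_exp_I_mul_sub_le (a b : ℝ) :
    ‖Complex.exp (Complex.I * a) - Complex.exp (Complex.I * b)‖ ≤ |a - b| := by
  have h1 : Complex.exp (Complex.I * a) - Complex.exp (Complex.I * b)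
      = Complex.exp (Complex.I * b) * (Complex.exp (Complex.I * (a - b)) - 1) := by
    rw [mul_sub, ← Complex.exp_add]; ring_nf
  rw [h1, norm_mul]
  have h2 : ‖Complex.exp (Complex.I * b)‖ = 1 := by
    rw [mul_comm]; exact_mod_cast Complex.norm_exp_ofReal_mul_I b
  rw [h2, one_mul]
  have hcast : ((a:ℂ) - b) = ((a - b : ℝ) : ℂ) := by push_cast; ring
  rw [hcast]
  exact abs_exp_I_mul_sub_one_le (a - b)

lemma abs_exp_I_mul_sub_le_two (a b : ℝ) :
    ‖Complex.exp (Complex.I * a) - Complex.exp (Complex.I * b)‖ ≤ 2 := by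
  calc ‖Complex.exp (Complex.I * a) - Complex.exp (Complex.I * b)‖
      ≤ ‖Complex.exp (Complex.I * a)‖ + ‖Complex.exp (Complex.I * b)‖ :=
        (norm_sub_le _ _)
    _ ≤ 2 := by
        rw [mul_comm, mul_comm Complex.I]
        rw [Complex.norm_exp_ofReal_mul_I, Complex.norm_exp_ofReal_mul_I]; norm_num

lemma min_le_two_rpow {m ε : ℝ} (hm : 0 ≤ m) (hε : 0 ≤ ε) (hε1 : ε ≤ 1) :
    min m 2 ≤ 2 ^ (1 - ε) * m ^ ε := by
  rcases eq_or_lt_of_le hm with h0 | h0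
  · have : min m 2 = 0 := by rw [← h0]; simp
    rw [this]
    positivity
  rcases le_total m 2 with hle | hle
  · calc min m 2 = m ^ (1 - ε) * m ^ ε := by
          rw [← Real.rpow_add h0]; simp [min_eq_left hle]
      _ ≤ 2 ^ (1 - ε) * m ^ ε := by
          have := Real.rpow_le_rpow hm hle (by linarith : (0:ℝ) ≤ 1 - ε)
          have h2 := Real.rpow_nonneg hm ε
          nlinarith
  · calc min m 2 = 2 ^ (1 - ε) * 2 ^ ε := by
          rw [← Real.rpow_add (by norm_num)]; simp [min_eq_right hle]
      _ ≤ 2 ^ (1 - ε) * m ^ ε := by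
          have := Real.rpow_le_rpow (by norm_num : (0:ℝ) ≤ 2) hle hε
          have h2 : (0:ℝ) ≤ (2:ℝ) ^ (1 - ε) := by positivity
          nlinarith

lemma one_le_Nnorm {d : ℕ} [Nontrivial (E d)] (g : Gd d) : 1 ≤ Nnorm g := by
  have h1 : ((g : E d →L[ℝ] E d) * ((g⁻¹ : Gd d) : E d →L[ℝ] E d)) = 1 := g.mul_inv
  have h2 : (1:ℝ) = ‖(1 : E d →L[ℝ] E d)‖ := (norm_one).symm
  have h3 : ‖(1 : E d →L[ℝ] E d)‖ ≤ ‖(g : E d →L[ℝ] E d)‖ * ‖((g⁻¹ : Gd d) : E d →L[ℝ] E d)‖ := by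
    rw [← h1]; exact norm_mul_le _ _
  have ha : ‖(g : E d →L[ℝ] E d)‖ ≤ Nnorm g := le_max_left _ _
  have hb : ‖((g⁻¹ : Gd d) : E d →L[ℝ] E d)‖ ≤ Nnorm g := le_max_right _ _
  have hN0 : 0 ≤ Nnorm g := Nnorm_nonneg g
  nlinarith [norm_nonneg (g : E d →L[ℝ] E d), norm_nonneg ((g⁻¹ : Gd d) : E d →L[ℝ] E d)]

lemma exp_diff_bound {ε t r₁ r₂ N D : ℝ} (hε0 : 0 < ε) (hε1 : ε ≤ 1)
    (hN0 : 0 < N) (hD0 : 0 ≤ D)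
    (hr : |r₁ - r₂| ≤ Real.sqrt 2 * (N ^ 2 * D)) :
    ‖Complex.exp (Complex.I * ((t:ℂ) * (r₁:ℂ))) - Complex.exp (Complex.I * ((t:ℂ) * (r₂:ℂ)))‖
      ≤ 2 * |t| ^ ε * (N ^ ((2:ℝ) * ε) * D ^ ε) := by
  rw [show ((t:ℂ) * (r₁:ℂ)) = ((t * r₁ : ℝ):ℂ) from (Complex.ofReal_mul t r₁).symm,
    show ((t:ℂ) * (r₂:ℂ)) = ((t * r₂ : ℝ):ℂ) from (Complex.ofReal_mul t r₂).symm]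
  set m : ℝ := |t| * (Real.sqrt 2 * (N ^ 2 * D)) with hm
  have hm0 : 0 ≤ m := by positivity
  have step1 : ‖Complex.exp (Complex.I * ((t * r₁ : ℝ):ℂ))
      - Complex.exp (Complex.I * ((t * r₂ : ℝ):ℂ))‖ ≤ min m 2 := by
    refine le_min ?_ (abs_exp_I_mul_sub_le_two _ _)
    refine le_trans (abs_exp_I_mul_sub_le _ _) ?_
    rw [← mul_sub, abs_mul]
    exact mul_le_mul_of_nonneg_left hr (abs_nonneg t)
  have step2 : min m 2 ≤ 2 ^ (1 - ε) * m ^ ε := min_le_two_rpow hm0 hε0.le hε1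
  have step3 : m ^ ε = |t| ^ ε * (2 ^ ((1/2:ℝ) * ε) * ((N ^ ((2:ℝ) * ε)) * D ^ ε)) := by
    rw [hm, Real.mul_rpow (abs_nonneg t) (by positivity),
      Real.mul_rpow (Real.sqrt_nonneg 2) (by positivity),
      Real.mul_rpow (by positivity) hD0,
      Real.sqrt_eq_rpow, ← Real.rpow_natCast N 2,
      ← Real.rpow_mul (by norm_num : (0:ℝ) ≤ 2),
      ← Real.rpow_mul hN0.le]
    norm_num
  have step4 : (2:ℝ) ^ (1 - ε) * (2 ^ ((1/2:ℝ) * ε)) ≤ 2 := by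
    rw [← Real.rpow_add (by norm_num : (0:ℝ) < 2)]
    calc (2:ℝ) ^ (1 - ε + 1/2 * ε) ≤ 2 ^ (1:ℝ) :=
          Real.rpow_le_rpow_of_exponent_le one_le_two (by linarith)
      _ = 2 := Real.rpow_one 2
  calc ‖_‖ ≤ 2 ^ (1 - ε) * m ^ ε := le_trans step1 step2
    _ = (2 ^ (1 - ε) * 2 ^ ((1/2:ℝ) * ε)) * (|t| ^ ε * (N ^ ((2:ℝ) * ε) * D ^ ε)) := by
        rw [step3]; ring
    _ ≤ 2 * (|t| ^ ε * (N ^ ((2:ℝ) * ε) * D ^ ε)) := by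
        apply mul_le_mul_of_nonneg_right step4
        positivity
    _ = 2 * |t| ^ ε * (N ^ ((2:ℝ) * ε) * D ^ ε) := by ring

lemma scalar_bound {ε θ α t C K N D r₁ r₂ : ℝ} {A B : ℂ}
    (hε0 : 0 < ε) (hε1 : ε ≤ 1) (hθα : (2:ℝ) * ε + θ = α)
    (hN : 1 ≤ N) (hD : 0 < D) (hC0 : 0 ≤ C) (hK0 : 0 ≤ K)
    (hr : |r₁ - r₂| ≤ Real.sqrt 2 * (N ^ 2 * D))
    (hA : ‖A‖ ≤ C * N ^ θ)
    (hAB : ‖A - B‖ ≤ K * (D ^ ε * N ^ α)) :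
    ‖Complex.exp (Complex.I * ((t:ℂ) * (r₁:ℂ))) * A
        - Complex.exp (Complex.I * ((t:ℂ) * (r₂:ℂ))) * B‖ / (D ^ ε * N ^ α)
      ≤ 2 * |t| ^ ε * C + K := by
  have hN0 : (0:ℝ) < N := lt_of_lt_of_le one_pos hN
  have hden : (0:ℝ) < D ^ ε * N ^ α :=
    mul_pos (Real.rpow_pos_of_pos hD ε) (Real.rpow_pos_of_pos hN0 α)
  rw [div_le_iff₀ hden]
  have hsplit : Complex.exp (Complex.I * ((t:ℂ) * (r₁:ℂ))) * A - Complex.exp (Complex.I * ((t:ℂ) * (r₂:ℂ))) * B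
      = (Complex.exp (Complex.I * ((t:ℂ) * (r₁:ℂ))) - Complex.exp (Complex.I * ((t:ℂ) * (r₂:ℂ)))) * A
        + Complex.exp (Complex.I * ((t:ℂ) * (r₂:ℂ))) * (A - B) := by ring
  have habs2 : ‖Complex.exp (Complex.I * ((t:ℂ) * (r₂:ℂ)))‖ = 1 := by
    rw [mul_comm]; exact_mod_cast Complex.norm_exp_ofReal_mul_I (t * r₂)
  have hNθα : N ^ ((2:ℝ) * ε) * N ^ θ = N ^ α := by
    rw [← Real.rpow_add hN0, hθα]
  calc ‖Complex.exp (Complex.I * ((t:ℂ) * (r₁:ℂ))) * A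
        - Complex.exp (Complex.I * ((t:ℂ) * (r₂:ℂ))) * B‖
      = ‖(Complex.exp (Complex.I * ((t:ℂ) * (r₁:ℂ)))
          - Complex.exp (Complex.I * ((t:ℂ) * (r₂:ℂ)))) * A
        + Complex.exp (Complex.I * ((t:ℂ) * (r₂:ℂ))) * (A - B)‖ := by rw [hsplit]
    _ ≤ ‖(Complex.exp (Complex.I * ((t:ℂ) * (r₁:ℂ)))
          - Complex.exp (Complex.I * ((t:ℂ) * (r₂:ℂ)))) * A‖
        + ‖Complex.exp (Complex.I * ((t:ℂ) * (r₂:ℂ))) * (A - B)‖ := norm_add_le _ _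
    _ = ‖Complex.exp (Complex.I * ((t:ℂ) * (r₁:ℂ)))
          - Complex.exp (Complex.I * ((t:ℂ) * (r₂:ℂ)))‖ * ‖A‖
        + ‖A - B‖ := by rw [norm_mul, norm_mul, habs2, one_mul]
    _ ≤ (2 * |t| ^ ε * (N ^ ((2:ℝ) * ε) * D ^ ε)) * (C * N ^ θ)
        + K * (D ^ ε * N ^ α) := by
          refine add_le_add ?_ hAB
          refine mul_le_mul (exp_diff_bound hε0 hε1 hN0 hD.le hr) hA
            (norm_nonneg _) ?_
          positivity
    _ = 2 * |t| ^ ε * C * (N ^ ((2:ℝ) * ε) * N ^ θ) * D ^ ε + K * (D ^ ε * N ^ α) := by ring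
    _ = (2 * |t| ^ ε * C + K) * (D ^ ε * N ^ α) := by rw [hNθα]; ring

set_option maxHeartbeats 1000000 in
theorem kP_exp_smul_le
    {d : ℕ} (δ₀ ε θ α : ℝ) (hδ₀ : 0 < δ₀) (hδ₀' : δ₀ ≤ 8 / 3)
    (hε : ε = δ₀ / 8) (hθ : θ = 3 * ε) (hα : α = 5 * ε)
    (h : Gd d → ℙ ℝ (E d) → ℂ)
    (hcont : Continuous fun p : Gd d × ℙ ℝ (E d) => h p.1 p.2)
    (hθfin : nθ θ h ≠ ⊤) (hkfin : kP ε α h ≠ ⊤) (t : ℝ) :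
    kP ε α (fun g x => Complex.exp (Complex.I * (t * ρ g x)) * h g x)
      ≤ ENNReal.ofReal (2 * |t| ^ ε) * nθ θ h + kP ε α h := by
  have hε0 : 0 < ε := by rw [hε]; positivity
  have hε1 : ε ≤ 1 := by rw [hε]; linarith
  simp only [kP]
  refine iSup_le fun g => iSup_le fun x => iSup_le fun y => iSup_le fun hxy => ?_
  haveI : Nontrivial (E d) := nontrivial_of_ne x.rep 0 x.rep_nonzero
  have hN : 1 ≤ Nnorm g := one_le_Nnorm g
  have hN0 : (0:ℝ) < Nnorm g := lt_of_lt_of_le one_pos hN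
  have hD0 : 0 ≤ dP x y := angDist_nonneg _ _
  set C := (nθ θ h).toReal with hC
  set K := (kP ε α h).toReal with hK
  have hC0 : 0 ≤ C := ENNReal.toReal_nonneg
  have hK0 : 0 ≤ K := ENNReal.toReal_nonneg
  rcases eq_or_lt_of_le hD0 with hD | hD
  · rw [← hD, Real.zero_rpow (ne_of_gt hε0)]
    simp
  have hhx : ‖h g x‖ ≤ C * Nnorm g ^ θ := by
    have h1 : ENNReal.ofReal (‖h g x‖ / Nnorm g ^ θ) ≤ nθ θ h :=
      le_iSup₂ (f := fun (g : Gd d) (x : ℙ ℝ (E d)) =>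
        ENNReal.ofReal (‖h g x‖ / Nnorm g ^ θ)) g x
    rw [← ENNReal.ofReal_toReal hθfin, ENNReal.ofReal_le_ofReal_iff hC0] at h1
    have hNθ : (0:ℝ) < Nnorm g ^ θ := Real.rpow_pos_of_pos hN0 θ
    calc ‖h g x‖ = ‖h g x‖ / Nnorm g ^ θ * Nnorm g ^ θ := by
          field_simp
      _ ≤ C * Nnorm g ^ θ := mul_le_mul_of_nonneg_right h1 hNθ.le
  have hΔh : ‖h g x - h g y‖ ≤ K * (dP x y ^ ε * Nnorm g ^ α) := by
    have h1 : ENNReal.ofReal (‖h g x - h g y‖ / (dP x y ^ ε * Nnorm g ^ α))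
        ≤ kP ε α h := by
      refine le_trans ?_ (le_iSup₂ (f := fun (g : Gd d) (x : ℙ ℝ (E d)) =>
        ⨆ (y : ℙ ℝ (E d)) (_ : x ≠ y), ENNReal.ofReal
          (‖h g x - h g y‖ / (dP x y ^ ε * Nnorm g ^ α))) g x)
      exact le_iSup₂ (f := fun (y : ℙ ℝ (E d)) (_ : x ≠ y) => ENNReal.ofReal
        (‖h g x - h g y‖ / (dP x y ^ ε * Nnorm g ^ α))) y hxy
    rw [← ENNReal.ofReal_toReal hkfin, ENNReal.ofReal_le_ofReal_iff hK0] at h1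
    have hden : (0:ℝ) < dP x y ^ ε * Nnorm g ^ α :=
      mul_pos (Real.rpow_pos_of_pos hD ε) (Real.rpow_pos_of_pos hN0 α)
    calc ‖h g x - h g y‖
        = ‖h g x - h g y‖ / (dP x y ^ ε * Nnorm g ^ α)
          * (dP x y ^ ε * Nnorm g ^ α) := by field_simp
      _ ≤ K * (dP x y ^ ε * Nnorm g ^ α) := mul_le_mul_of_nonneg_right h1 hden.le
  have hr := abs_rho_sub_le g x y
  set N := Nnorm g with hNdef
  set D := dP x y with hDdef
  set r₁ := ρ g x with hr1
  set r₂ := ρ g y with hr2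
  set A := h g x with hA
  set B := h g y with hB
  clear_value N D r₁ r₂ A B
  have hq : ‖Complex.exp (Complex.I * ((t:ℂ) * (r₁:ℂ))) * A
      - Complex.exp (Complex.I * ((t:ℂ) * (r₂:ℂ))) * B‖ / (D ^ ε * N ^ α)
      ≤ 2 * |t| ^ ε * C + K :=
    scalar_bound hε0 hε1 (by rw [hθ, hα]; ring) hN hD hC0 hK0 hr hhx hΔh
  calc ENNReal.ofReal (‖Complex.exp (Complex.I * ((t:ℂ) * (r₁:ℂ))) * A
        - Complex.exp (Complex.I * ((t:ℂ) * (r₂:ℂ))) * B‖ / (D ^ ε * N ^ α))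
      ≤ ENNReal.ofReal (2 * |t| ^ ε * C + K) := ENNReal.ofReal_le_ofReal hq
    _ ≤ ENNReal.ofReal (2 * |t| ^ ε * C) + ENNReal.ofReal K := ENNReal.ofReal_add_le
    _ = ENNReal.ofReal (2 * |t| ^ ε) * ENNReal.ofReal C + ENNReal.ofReal K := by
        rw [ENNReal.ofReal_mul (by positivity)]
    _ = ENNReal.ofReal (2 * |t| ^ ε) * nθ θ h + kP ε α h := by
        rw [hC, hK, ENNReal.ofReal_toReal hθfin, ENNReal.ofReal_toReal hkfin]
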